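/- Let n ≥ 3 and 2 ≤ k ≤ (n choose 2) be integers, let p ≥ 2 be the integer with k·(p choose 2) ≤ (n choose 2) < k·((p+1) choose 2), and write (n choose 2) = k·(p choose 2) + q·p + r with integers 0 ≤ q < k and 0 ≤ r < p. Then M(k,n) ≤ k·p − k + q if r ≤ (p−1)/2, and M(k,n) ≤ k·p − k + q + 1 − 2(p−r)/(p+1) if r ≥ (p−1)/2. Moreover, equality holds whenever K_n admits an edge decomposition into q copies of K_{p+1} and k−q copies of K_p (in the case r = 0), or into q copies of K_{p+1}, k−q−1 copies of K_p, and one copy of some graph G having (p choose 2)+r edges and Mad(G) = g((p choose 2)+r) (in the case 0 < r < p). -/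

import Mathlib

/-- Number of edges of a finite simple graph. -/
noncomputable def edgeCnt {V : Type} [Fintype V] (G : SimpleGraph V) : ℕ :=
  G.edgeSet.ncard

/-- Number of edges of `G` with both endpoints in `X`. -/
noncomputable def inducedEdgeCnt {V : Type} [Fintype V] (G : SimpleGraph V) (X : Finset V) : ℕ :=
  {e : Sym2 V | e ∈ G.edgeSet ∧ ∀ v ∈ e, v ∈ X}.ncard

/-- Maximum average degree of a finite simple graph. -/
noncomputable def Mad {V : Type} [Fintype V] (G : SimpleGraph V) : ℝ :=
  sSup {d : ℝ | ∃ X : Finset V, X.Nonempty ∧ d = 2 * (inducedEdgeCnt G X : ℝ) / (X.card : ℝ)}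

/-- A `k`-decomposition of the complete graph `K_n`. -/
def IsKDecomp {k n : ℕ} (G : Fin k → SimpleGraph (Fin n)) : Prop :=
  (∀ i j, i ≠ j → Disjoint (G i).edgeSet (G j).edgeSet) ∧
  (⋃ i, (G i).edgeSet) = (⊤ : SimpleGraph (Fin n)).edgeSet

/-- `M(k,n)`: maximum of `Mad(G_1)+…+Mad(G_k)` over all `k`-decompositions of `K_n`. -/
noncomputable def MSum (k n : ℕ) : ℝ :=
  sSup {s : ℝ | ∃ G : Fin k → SimpleGraph (Fin n), IsKDecomp G ∧ s = ∑ i, Mad (G i)}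

/-- `M^L(k,N)`: maximum of `Mad(G_1)+…+Mad(G_k)` over all lists of `k` finite graphs
with `N` edges in total. -/
noncomputable def MSumL (k N : ℕ) : ℝ :=
  sSup {s : ℝ | ∃ (V : Fin k → Type) (hV : ∀ i, Fintype (V i)) (G : ∀ i, SimpleGraph (V i)),
    (∑ i, @edgeCnt (V i) (hV i) (G i)) = N ∧ s = ∑ i, @Mad (V i) (hV i) (G i)}

/-- `g(m)`: maximum of `Mad(G)` over all finite simple graphs with exactly `m` edges. -/
noncomputable def gMax (m : ℕ) : ℝ :=
  sSup {d : ℝ | ∃ (V : Type) (hV : Fintype V) (G : SimpleGraph V),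
    @edgeCnt V hV G = m ∧ d = @Mad V hV G}

/-- The complete graph on the vertex subset `S` inside `Fin n`. -/
def cliqueOn {n : ℕ} (S : Finset (Fin n)) : SimpleGraph (Fin n) :=
  SimpleGraph.fromRel (fun a b => a ∈ S ∧ b ∈ S)


theorem intConsec (z : ℤ) : 0 ≤ z * (z - 1) := by
  rcases le_or_gt z 0 with h | h <;> nlinarith

theorem L1 (p a w : ℤ) (hp : 2 ≤ p) (hw0 : 0 ≤ w) (hw : w ≤ p - 1)
    (hM : 0 ≤ p*(p-1) + 2*p*a + 2*w) : 1 ≤ p + a := by nlinarith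

theorem L2 (p a w x : ℤ) (hp : 2 ≤ p) (hw0 : 0 ≤ w) (hw : w ≤ p - 1) (hx : 1 ≤ x)
    (h : x*(x-1) ≤ p*(p-1) + 2*p*a + 2*w) : x ≤ p + a := by
  have hM : (0:ℤ) ≤ p*(p-1) + 2*p*a + 2*w := le_trans (intConsec x) h
  have hpa := L1 p a w hp hw0 hw hM
  by_contra hc
  push_neg at hc
  have hc' : p + a + 1 ≤ x := hc
  have h1 : 0 ≤ (x - (p+a+1)) * (x + p + a) := by
    apply mul_nonneg (by linarith) (by linarith)
  nlinarith [intConsec (a+1)]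

theorem L3 (p a w x : ℤ) (hp : 2 ≤ p) (hw0 : 0 ≤ w) (hw : 2*w ≤ p - 1) (hx : 1 ≤ x)
    (hM : 0 ≤ p*(p-1) + 2*p*a + 2*w)
    (h : p*(p-1) + 2*p*a + 2*w + 2 ≤ x*(x-1)) : p*(p-1) + 2*p*a + 2*w ≤ x*(a+p-1) := by
  have hpa : 1 ≤ p + a := L1 p a w hp hw0 (by linarith) hM
  by_contra hc
  push_neg at hc
  have hc' : x*(a+p-1) + 1 ≤ p*(p-1) + 2*p*a + 2*w := hc
  have s1 : 3 ≤ x*(x-a-p) := by nlinarith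
  have s2 : a + p + 1 ≤ x := by
    by_contra h2
    push_neg at h2
    have h3 : x - a - p ≤ 0 := by linarith
    nlinarith
  have s3 : (a+p+1)*(a+p-1) ≤ x*(a+p-1) :=
    mul_le_mul_of_nonneg_right s2 (by linarith)
  nlinarith [sq_nonneg a]

theorem K (p a w x : ℤ) (hp : 2 ≤ p) (hw2 : p ≤ 2*w) (hw : w ≤ p - 1) (hx : 1 ≤ x)
    (hpin1 : p*(p-1) + 2*p*a + 2*w + 2 ≤ x*(x-1))
    (hpin2 : (x-1)*(x-2) ≤ p*(p-1) + 2*p*a + 2*w) :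
    (p*(p-1) + 2*p*a + 2*w) * (p+1) ≤ x * ((p*(p-1) + 2*p*a + 2*w) - a*(p-1)) := by
  have h0 : (0:ℤ) ≤ (x-1)*(x-2) := by nlinarith [intConsec (x-1)]
  have hM : (0:ℤ) ≤ p*(p-1) + 2*p*a + 2*w := le_trans h0 hpin2
  have hpa : 1 ≤ p + a := L1 p a w hp (by linarith) hw hM
  have hL : 0 ≤ a * (a*(p+1) + 2*w - p + 1) := by
    rcases le_or_gt 0 a with ha | ha
    · have h1 : 0 ≤ a*(p+1) + 2*w - p + 1 := by nlinarith
      exact mul_nonneg ha h1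
    · have ha' : a ≤ -1 := by linarith
      have h1 : 0 ≤ (-a) * (-(a*(p+1) + 2*w - p + 1)) := by
        apply mul_nonneg (by linarith)
        nlinarith
      nlinarith [h1]
  rcases le_or_gt (p + a + 1) x with hu | hu
  · nlinarith [hL, mul_nonneg (by linarith : (0:ℤ) ≤ x - (p+a+1)) (by nlinarith : (0:ℤ) ≤ (p*(p-1) + 2*p*a + 2*w) - a*(p-1))]
  · have hu' : x ≤ p + a := by linarith
    rcases le_or_gt 0 a with ha | ha
    · nlinarith [hL, mul_nonneg (by linarith : (0:ℤ) ≤ p + a - x) (by linarith : (0:ℤ) ≤ p + a - x + 1), mul_nonneg (mul_nonneg (by linarith : (0:ℤ) ≤ p + a - x) (by linarith : (0:ℤ) ≤ x)) (by linarith : (0:ℤ) ≤ p - 2), mul_nonneg ha (by linarith : (0:ℤ) ≤ p + a - x), mul_nonneg (mul_nonneg ha ha) (by linarith : (0:ℤ) ≤ p + a - x)]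
    · have ha' : a ≤ -1 := by linarith
      nlinarith [hL, mul_nonneg (by linarith : (0:ℤ) ≤ p + a - x) (by linarith : (0:ℤ) ≤ p + a - x + 1), mul_nonneg (by linarith : (0:ℤ) ≤ -a) (by linarith : (0:ℤ) ≤ p + a - x), mul_nonneg (mul_nonneg (by linarith : (0:ℤ) ≤ -a) (by linarith : (0:ℤ) ≤ -a)) (by linarith : (0:ℤ) ≤ p + a - x), mul_nonneg (by linarith : (0:ℤ) ≤ p + a - x) (by linarith : (0:ℤ) ≤ x - 1)]

noncomputable def posP (p w : ℝ) : ℝ := max 0 ((2*w - p + 1)/(p+1))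

theorem evenGap {A B : ℤ} (hA : Even A) (hB : Even B) (h : A < B) : A + 2 ≤ B := by
  rcases hA with ⟨s, hs⟩; rcases hB with ⟨t, ht⟩; omega

theorem Qlemma (p a w m : ℤ) (hp : 2 ≤ p) (hw0 : 0 ≤ w) (hw : w ≤ p - 1) (hm0 : 0 ≤ m)
    (hm : 2*m = p*(p-1) + 2*p*a + 2*w) :
    ∀ x : ℕ, 1 ≤ x → 2*m + 2 ≤ (x:ℤ)*((x:ℤ)-1) → 2*(m:ℝ)/(x:ℝ) ≤ (a:ℝ) + p - 1 + posP p w := by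
  intro x
  induction x using Nat.strong_induction_on with
  | _ x IH =>
    intro hx1 hx2
    have hxR : (0:ℝ) < (x:ℝ) := by exact_mod_cast hx1
    have hpR : (0:ℝ) < (p:ℝ) + 1 := by
      have : (2:ℝ) ≤ (p:ℝ) := by exact_mod_cast hp
      linarith
    rcases le_or_gt (((x:ℤ)-1)*((x:ℤ)-2)) (2*m) with hpin2 | hgt
    · -- pinch case
      rcases le_or_gt (2*w) (p-1) with hsw | hlw
      · -- small w : use L3
        have h3 := L3 p a w x hp hw0 hsw (by exact_mod_cast hx1) (by linarith) (by linarith [hm])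
        have h3' : 2*m ≤ (x:ℤ)*(a+p-1) := by linarith
        have : 2*(m:ℝ)/(x:ℝ) ≤ (a:ℝ) + p - 1 := by
          rw [div_le_iff₀ hxR]
          have : ((2*m : ℤ):ℝ) ≤ (((x:ℤ)*(a+p-1) : ℤ):ℝ) := Int.cast_le.2 h3'
          push_cast at this ⊢
          linarith
        have hpos : 0 ≤ posP p w := le_max_left _ _
        linarith
      · -- large w : use K
        have hK := K p a w x hp (by linarith) hw (by exact_mod_cast hx1) (by linarith [hm]) (by linarith [hm])
        have step : 2*(m:ℝ)/(x:ℝ) ≤ ((2*(m:ℝ) - a*(p-1)))/((p:ℝ)+1) := by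
          rw [div_le_div_iff₀ hxR hpR]
          have hKR : (((p*(p-1) + 2*p*a + 2*w) * (p+1) : ℤ):ℝ) ≤ ((x * ((p*(p-1) + 2*p*a + 2*w) - a*(p-1)) : ℤ):ℝ) := Int.cast_le.2 hK
          push_cast at hKR
          push_cast
          have hmR : 2*(m:ℝ) = (p:ℝ)*((p:ℝ)-1) + 2*(p:ℝ)*(a:ℝ) + 2*(w:ℝ) := by exact_mod_cast hm
          have e1 : (2*(m:ℝ) - (a:ℝ)*((p:ℝ)-1))*(x:ℝ) = (x:ℝ)*(((p:ℝ)*((p:ℝ)-1)+2*(p:ℝ)*(a:ℝ)+2*(w:ℝ)) - (a:ℝ)*((p:ℝ)-1)) := by linear_combination (x:ℝ) * hmR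
          have e2 : 2*(m:ℝ)*((p:ℝ)+1) = ((p:ℝ)*((p:ℝ)-1)+2*(p:ℝ)*(a:ℝ)+2*(w:ℝ))*((p:ℝ)+1) := by linear_combination ((p:ℝ)+1) * hmR
          linarith [hKR, e1, e2]
        have eqn : ((2*(m:ℝ) - a*(p-1)))/((p:ℝ)+1) = (a:ℝ) + p - 1 + (2*(w:ℝ) - p + 1)/((p:ℝ)+1) := by
          have hmR : 2*(m:ℝ) = (p:ℝ)*(p-1) + 2*p*a + 2*w := by exact_mod_cast hm
          field_simp
          nlinarith [hmR]
        rw [eqn] at step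
        have : (2*(w:ℝ) - p + 1)/((p:ℝ)+1) ≤ posP p w := le_max_right _ _
        linarith
    · -- descend
      have hx2' : 2 ≤ x := by
        rcases Nat.lt_or_ge x 2 with h | h
        · exfalso
          have hx1' : x = 1 := by omega
          subst hx1'
          simp at hx2
          omega
        · exact h
      have heven1 : Even (((x:ℤ)-1)*((x:ℤ)-2)) := by
        rcases Int.even_or_odd ((x:ℤ)) with ⟨t,ht⟩ | ⟨t,ht⟩
        · exact ⟨(t-1)*((x:ℤ)-1), by rw [ht]; ring⟩
        · exact ⟨t*((x:ℤ)-2), by rw [ht]; ring⟩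
      have heven2 : Even (2*m) := ⟨m, by ring⟩
      have hdesc : 2*m + 2 ≤ ((x:ℤ)-1)*(((x:ℤ)-1)-1) := by
        have := evenGap heven2 heven1 hgt
        linarith [this]
      have hcast : ((x-1 : ℕ) : ℤ) = (x:ℤ) - 1 := by
        push_cast [Nat.cast_sub (by omega : 1 ≤ x)]; ring
      have IH' := IH (x-1) (by omega) (by omega) (by rw [hcast]; exact hdesc)
      have hmono : 2*(m:ℝ)/(x:ℝ) ≤ 2*(m:ℝ)/((x-1 : ℕ):ℝ) := by
        apply div_le_div_of_nonneg_left (by positivity) _ _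
        · have : (1:ℝ) ≤ ((x-1:ℕ):ℝ) := by exact_mod_cast (by omega : 1 ≤ x - 1)
          linarith
        · have : ((x-1:ℕ):ℝ) ≤ (x:ℝ) := by exact_mod_cast (by omega : x - 1 ≤ x)
          exact this
      linarith


noncomputable def delP (p w : ℝ) : ℝ := w/p - posP p w

theorem posP_nonneg (p w : ℝ) : 0 ≤ posP p w := le_max_left _ _

theorem delP_zero (p : ℝ) (hp : 2 ≤ p) : delP p 0 = 0 := by
  unfold delP posP
  have h1 : (2*(0:ℝ) - p + 1)/(p+1) ≤ 0 := by
    apply div_nonpos_of_nonpos_of_nonneg <;> linarith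
  rw [max_eq_left h1]
  simp

theorem chord0 (p : ℝ) (hp : 2 ≤ p) (u s : ℝ) (hu : 0 ≤ u) (hus : u ≤ s) :
    u * delP p s ≤ s * delP p u := by
  unfold delP posP
  have hp1 : (0:ℝ) < p + 1 := by linarith
  have key : s * max 0 ((2*u - p + 1)/(p+1)) ≤ u * max 0 ((2*s - p + 1)/(p+1)) := by
    rcases le_or_gt ((2*u - p + 1)/(p+1)) 0 with h | h
    · rw [max_eq_left h]
      simp
      exact mul_nonneg hu (le_max_left _ _)
    · have hAu : 0 < (2*u - p + 1) := by
        by_contra hcon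
        push_neg at hcon
        have : (2*u - p + 1)/(p+1) ≤ 0 := div_nonpos_of_nonpos_of_nonneg hcon (by linarith)
        linarith
      have hAs : (0:ℝ) ≤ (2*s - p + 1)/(p+1) := by
        apply div_nonneg (by linarith) (by linarith)
      rw [max_eq_right (le_of_lt h), max_eq_right hAs]
      rw [← sub_nonneg]
      have hi : u*((2*s - p + 1)/(p+1)) - s*((2*u - p + 1)/(p+1)) = ((s-u)*(p-1))/(p+1) := by
        field_simp
        ring
      rw [hi]
      apply div_nonneg (by nlinarith) (by linarith)
  have expand : u * (s/p - max 0 ((2*s - p + 1)/(p+1))) = u*s/p - u * max 0 ((2*s - p + 1)/(p+1)) := by ring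
  have expand2 : s * (u/p - max 0 ((2*u - p + 1)/(p+1))) = u*s/p - s * max 0 ((2*u - p + 1)/(p+1)) := by ring
  rw [expand, expand2]
  linarith

theorem chordP (p : ℝ) (hp : 2 ≤ p) (c u : ℝ) (hc : 0 ≤ c) (hcu : c ≤ u) (hup : u ≤ p) :
    (p - u) * delP p c ≤ (p - c) * delP p u := by
  unfold delP posP
  have hp1 : (0:ℝ) < p + 1 := by linarith
  have base : (p - u) * (c/p) + (u - c) = (p - c) * (u/p) := by
    field_simp
    ring
  rcases le_or_gt ((2*u - p + 1)/(p+1)) 0 with h | h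
  · rw [max_eq_left h]
    have h1 : 0 ≤ (u - c) := by linarith
    have h2 : 0 ≤ (p - u) * max 0 ((2*c - p + 1)/(p+1)) := by
      apply mul_nonneg (by linarith) (le_max_left _ _)
    nlinarith [base]
  · have hMu : max 0 ((2*u - p + 1)/(p+1)) = (2*u - p + 1)/(p+1) := max_eq_right (le_of_lt h)
    rw [hMu]
    have hMc : (2*c - p + 1)/(p+1) ≤ max 0 ((2*c - p + 1)/(p+1)) := le_max_right _ _
    -- (p-u)*Ac - (p-c)*Au = c - u   (identity)
    have iden : (p - u) * ((2*c - p + 1)/(p+1)) - (p - c) * ((2*u - p + 1)/(p+1)) = c - u := by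
      field_simp
      ring
    have h3 : (p - u) * max 0 ((2*c - p + 1)/(p+1)) ≥ (p - u) * ((2*c - p + 1)/(p+1)) := by
      apply mul_le_mul_of_nonneg_left hMc (by linarith)
    nlinarith [base, iden, h3]

theorem subadd2a (p : ℝ) (hp : 2 ≤ p) (u v : ℝ) (hu : 0 ≤ u) (hv : 0 ≤ v) :
    delP p (u + v) ≤ delP p u + delP p v := by
  rcases eq_or_lt_of_le (by linarith : (0:ℝ) ≤ u + v) with h0 | h0
  · have hu0 : u = 0 := by linarith
    have hv0 : v = 0 := by linarith
    rw [hu0, hv0]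
    simp [delP_zero p hp]
  · have c1 := chord0 p hp u (u+v) hu (by linarith)
    have c2 := chord0 p hp v (u+v) hv (by linarith)
    have : (u+v) * delP p (u+v) ≤ (u+v) * (delP p u + delP p v) := by nlinarith [c1, c2]
    exact le_of_mul_le_mul_left this h0

theorem subadd2b (p : ℝ) (hp : 2 ≤ p) (u v : ℝ) (hu : 0 ≤ u) (hv : 0 ≤ v)
    (hup : u ≤ p) (hvp : v ≤ p) (hs : p ≤ u + v) (hlt : u + v - p < p) :
    delP p (u + v - p) ≤ delP p u + delP p v := by
  have hc0 : 0 ≤ u + v - p := by linarith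
  have c1 := chordP p hp (u + v - p) u hc0 (by linarith) hup
  have c2 := chordP p hp (u + v - p) v hc0 (by linarith) hvp
  have hsum : (p - (u + v - p)) * delP p (u + v - p)
      ≤ (p - (u + v - p)) * (delP p u + delP p v) := by nlinarith [c1, c2]
  exact le_of_mul_le_mul_left hsum (by linarith)

theorem emod_bounds (W p : ℤ) (hp : 2 ≤ p) : 0 ≤ W % p ∧ W % p < p :=
  ⟨Int.emod_nonneg W (by omega), Int.emod_lt_of_pos W (by omega)⟩

theorem subaddSum (p : ℤ) (hp : 2 ≤ p) {k : ℕ} (w : Fin k → ℤ)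
    (hw : ∀ i, 0 ≤ w i ∧ w i < p) (s : Finset (Fin k)) :
    delP (p:ℝ) ((((∑ i ∈ s, w i) % p : ℤ)):ℝ) ≤ ∑ i ∈ s, delP (p:ℝ) ((w i : ℝ)) := by
  have hpR : (2:ℝ) ≤ (p:ℝ) := by exact_mod_cast hp
  induction s using Finset.cons_induction with
  | empty =>
    have : ((0:ℤ) % p) = 0 := Int.zero_emod p
    simp only [Finset.sum_empty, this, Int.cast_zero]
    rw [delP_zero _ hpR]
  | cons i s his IH =>
    rw [Finset.sum_cons, Finset.sum_cons]
    have hW := emod_bounds (∑ j ∈ s, w j) p hp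
    set W := (∑ j ∈ s, w j) % p with hWdef
    have hrw : (w i + ∑ j ∈ s, w j) % p = (w i + W) % p := by
      have hsplit : w i + (∑ j ∈ s, w j) = (w i + W) + p * ((∑ j ∈ s, w j)/p) := by
        rw [hWdef]
        have := Int.emod_add_mul_ediv (∑ j ∈ s, w j) p
        linarith
      rw [hsplit, Int.add_mul_emod_self_left]
    rw [hrw]
    have hwi := hw i
    rcases lt_or_ge (w i + W) p with hlt | hge
    · have heq : (w i + W) % p = w i + W := Int.emod_eq_of_lt (by omega) hlt
      rw [heq]
      have hsub := subadd2a (p:ℝ) hpR (w i : ℝ) (W : ℝ) (by exact_mod_cast hwi.1) (by exact_mod_cast hW.1)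
      refine le_trans (by push_cast; exact hsub) ?_
      linarith [IH]
    · have heq : (w i + W) % p = w i + W - p := by
        conv_lhs => rw [show w i + W = (w i + W - p) + p * 1 by ring]
        rw [Int.add_mul_emod_self_left]
        exact Int.emod_eq_of_lt (by omega) (by omega)
      rw [heq]
      have hsub := subadd2b (p:ℝ) hpR (w i : ℝ) (W : ℝ) (by exact_mod_cast hwi.1) (by exact_mod_cast hW.1)
        (by exact_mod_cast le_of_lt hwi.2) (by exact_mod_cast le_of_lt hW.2)
        (by exact_mod_cast hge) (by push_cast; exact_mod_cast (by omega : w i + W - p < p))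
      refine le_trans (by push_cast; exact hsub) ?_
      linarith [IH]

theorem two_choose (x : ℕ) : 2 * x.choose 2 = x * (x - 1) := by
  induction x with
  | zero => rfl
  | succ s IH =>
    rw [show s + 1 - 1 = s by omega]
    rcases s with _ | t
    · rfl
    · rw [Nat.choose_succ_succ (t+1) 1, Nat.mul_add, IH, Nat.choose_one_right]
      rw [show t + 1 - 1 = t by omega]
      ring

theorem ncard_top_edgeSet (V : Type) [Fintype V] [DecidableEq V] :
    (⊤ : SimpleGraph V).edgeSet.ncard = (Fintype.card V).choose 2 := by
  classical
  rw [Set.ncard_eq_toFinset_card']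
  exact SimpleGraph.card_edgeFinset_top_eq_card_choose_two

-- the set of edges of the complete graph on ↥X, pushed into V
theorem ncard_topimage {V : Type} [Fintype V] [DecidableEq V] (X : Finset V) :
    ((Sym2.map (Subtype.val : {x // x ∈ X} → V)) '' (⊤ : SimpleGraph {x // x ∈ X}).edgeSet).ncard
      = X.card.choose 2 := by
  classical
  rw [Set.ncard_image_of_injective _ (Sym2.map.injective Subtype.val_injective)]
  rw [ncard_top_edgeSet, Fintype.card_coe]

theorem inducedEdgeCnt_le_choose {V : Type} [Fintype V] [DecidableEq V]
    (G : SimpleGraph V) (X : Finset V) : inducedEdgeCnt G X ≤ X.card.choose 2 := by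
  classical
  rw [← ncard_topimage X]
  apply Set.ncard_le_ncard _ (Set.toFinite _)
  rintro e ⟨he, hX⟩
  induction e with
  | _ a b =>
    rw [SimpleGraph.mem_edgeSet] at he
    have ha : a ∈ X := hX a (Sym2.mem_mk_left a b)
    have hb : b ∈ X := hX b (Sym2.mem_mk_right a b)
    refine ⟨s(⟨a, ha⟩, ⟨b, hb⟩), ?_, ?_⟩
    · rw [SimpleGraph.mem_edgeSet]
      simp only [SimpleGraph.top_adj]
      intro hcon
      exact (G.ne_of_adj he) (congrArg Subtype.val hcon)
    · simp [Sym2.map_pair_eq]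

theorem inducedEdgeCnt_ge_choose {V : Type} [Fintype V] [DecidableEq V]
    (G : SimpleGraph V) (X : Finset V)
    (h : ∀ a b, a ∈ X → b ∈ X → a ≠ b → G.Adj a b) :
    X.card.choose 2 ≤ inducedEdgeCnt G X := by
  classical
  rw [← ncard_topimage X]
  apply Set.ncard_le_ncard _ (Set.toFinite _)
  rintro e ⟨f, hf, rfl⟩
  induction f with
  | _ u v =>
    rw [SimpleGraph.mem_edgeSet, SimpleGraph.top_adj] at hf
    rw [Sym2.map_pair_eq]
    refine ⟨?_, ?_⟩
    · rw [SimpleGraph.mem_edgeSet]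
      exact h u.val v.val u.2 v.2 (Subtype.val_injective.ne hf)
    · intro x hx
      rcases Sym2.mem_iff.1 hx with h1 | h1 <;> subst h1
      · exact u.2
      · exact v.2

theorem inducedEdgeCnt_le_edgeCnt {V : Type} [Fintype V] (G : SimpleGraph V) (X : Finset V) :
    inducedEdgeCnt G X ≤ edgeCnt G :=
  Set.ncard_le_ncard (fun _ he => he.1) (Set.toFinite _)

theorem inducedEdgeCnt_univ {V : Type} [Fintype V] (G : SimpleGraph V) :
    inducedEdgeCnt G Finset.univ = edgeCnt G := by
  unfold inducedEdgeCnt edgeCnt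
  congr 1
  ext e
  simp

theorem mad_bddAbove {V : Type} [Fintype V] (G : SimpleGraph V) :
    ∀ d ∈ {d : ℝ | ∃ X : Finset V, X.Nonempty ∧ d = 2 * (inducedEdgeCnt G X : ℝ) / (X.card : ℝ)},
      d ≤ 2 * (edgeCnt G : ℝ) := by
  rintro d ⟨X, hX, rfl⟩
  have hx1 : (1:ℝ) ≤ (X.card : ℝ) := by
    exact_mod_cast Finset.card_pos.2 hX
  have hc : (inducedEdgeCnt G X : ℝ) ≤ (edgeCnt G : ℝ) := by
    exact_mod_cast inducedEdgeCnt_le_edgeCnt G X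
  have h1 : 2 * (inducedEdgeCnt G X : ℝ) / (X.card : ℝ) ≤ 2 * (inducedEdgeCnt G X : ℝ) := by
    apply div_le_self (by positivity) hx1
  linarith

theorem mad_ge {V : Type} [Fintype V] (G : SimpleGraph V) (X : Finset V) (hX : X.Nonempty) :
    2 * (inducedEdgeCnt G X : ℝ) / (X.card : ℝ) ≤ Mad G :=
  le_csSup ⟨_, mad_bddAbove G⟩ ⟨X, hX, rfl⟩

theorem mad_le {V : Type} [Fintype V] (G : SimpleGraph V) (B : ℝ) (hB : 0 ≤ B)
    (h : ∀ X : Finset V, X.Nonempty → 2 * (inducedEdgeCnt G X : ℝ) / (X.card : ℝ) ≤ B) :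
    Mad G ≤ B := by
  apply Real.sSup_le _ hB
  rintro d ⟨X, hX, rfl⟩
  exact h X hX


theorem Amain (p a w c m : ℤ) (hp : 2 ≤ p) (hw0 : 0 ≤ w) (hw : w ≤ p - 1)
    (hc0 : 0 ≤ c) (hcm : c ≤ m) (hm : 2*m = p*(p-1) + 2*p*a + 2*w)
    (x : ℕ) (hx : 1 ≤ x) (hc2 : 2*c ≤ (x:ℤ)*((x:ℤ)-1)) :
    2*(c:ℝ)/(x:ℝ) ≤ (a:ℝ) + (p:ℝ) - 1 + posP (p:ℝ) (w:ℝ) := by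
  have hm0 : 0 ≤ m := le_trans hc0 hcm
  have hxR : (0:ℝ) < (x:ℝ) := by exact_mod_cast hx
  rcases le_or_gt ((x:ℤ)*((x:ℤ)-1)) (2*m) with h | h
  · have hxa := L2 p a w x hp hw0 hw (by exact_mod_cast hx) (by linarith)
    have h1 : 2*(c:ℝ)/(x:ℝ) ≤ (x:ℝ) - 1 := by
      rw [div_le_iff₀ hxR]
      have hcast : ((2*c : ℤ):ℝ) ≤ (((x:ℤ)*((x:ℤ)-1) : ℤ):ℝ) := Int.cast_le.2 hc2
      push_cast at hcast
      nlinarith [hcast]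
    have h2 : ((x:ℝ)) ≤ (p:ℝ) + a := by exact_mod_cast hxa
    have := posP_nonneg (p:ℝ) (w:ℝ)
    linarith
  · have hgap : 2*m + 2 ≤ (x:ℤ)*((x:ℤ)-1) := by
      have he1 : Even (2*m) := ⟨m, by ring⟩
      have he2 : Even ((x:ℤ)*((x:ℤ)-1)) := by
        rcases Int.even_or_odd ((x:ℤ)) with ⟨t,ht⟩ | ⟨t,ht⟩
        · exact ⟨t*((x:ℤ)-1), by rw [ht]; ring⟩
        · exact ⟨(x:ℤ)*t, by rw [ht]; ring⟩
      exact evenGap he1 he2 h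
    have hQ := Qlemma p a w m hp hw0 hw hm0 hm x hx hgap
    have hcm' : (c:ℝ) ≤ (m:ℝ) := by exact_mod_cast hcm
    have hmono : 2*(c:ℝ)/(x:ℝ) ≤ 2*(m:ℝ)/(x:ℝ) :=
      (div_le_div_iff_of_pos_right hxR).2 (by linarith)
    linarith

theorem mad_le_bound {V : Type} [Fintype V] [DecidableEq V] (G : SimpleGraph V) (p a w : ℤ)
    (hp : 2 ≤ p) (hw0 : 0 ≤ w) (hw : w ≤ p - 1)
    (hm : 2*(edgeCnt G : ℤ) = p*(p-1) + 2*p*a + 2*w) :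
    Mad G ≤ (a:ℝ) + (p:ℝ) - 1 + posP (p:ℝ) (w:ℝ) := by
  have hM : (0:ℤ) ≤ p*(p-1) + 2*p*a + 2*w := by
    rw [← hm]; positivity
  have hpa := L1 p a w hp hw0 hw hM
  have hB : 0 ≤ (a:ℝ) + (p:ℝ) - 1 + posP (p:ℝ) (w:ℝ) := by
    have h1 : (1:ℝ) ≤ (p:ℝ) + a := by exact_mod_cast hpa
    linarith [posP_nonneg (p:ℝ) (w:ℝ)]
  apply mad_le G _ hB
  intro X hX
  have hx : 1 ≤ X.card := Finset.card_pos.2 hX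
  have h1 : inducedEdgeCnt G X ≤ X.card.choose 2 := inducedEdgeCnt_le_choose G X
  have h3 : (2 * (inducedEdgeCnt G X : ℤ)) ≤ ((X.card:ℤ)) * ((X.card:ℤ) - 1) := by
    have h4 := Nat.mul_le_mul_left 2 h1
    rw [two_choose _] at h4
    have h5 : ((2 * inducedEdgeCnt G X : ℕ):ℤ) ≤ ((X.card * (X.card - 1) : ℕ):ℤ) := by
      exact_mod_cast h4
    push_cast [Nat.cast_sub hx] at h5
    push_cast
    linarith
  exact Amain p a w (inducedEdgeCnt G X) (edgeCnt G) hp hw0 hw (by positivity)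
    (by exact_mod_cast inducedEdgeCnt_le_edgeCnt G X) hm X.card hx h3

theorem decomp_sum {k n : ℕ} (G : Fin k → SimpleGraph (Fin n)) (h : IsKDecomp G) :
    ∑ i, edgeCnt (G i) = Nat.choose n 2 := by
  classical
  have hU : Finset.univ.biUnion (fun i => (G i).edgeSet.toFinset)
      = (⊤ : SimpleGraph (Fin n)).edgeSet.toFinset := by
    ext e
    simp only [Finset.mem_biUnion, Set.mem_toFinset, Finset.mem_univ, true_and]
    rw [show (e ∈ (⊤ : SimpleGraph (Fin n)).edgeSet) = (e ∈ ⋃ i, (G i).edgeSet) from by rw [h.2]]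
    simp [Set.mem_iUnion]
  have hd : ∀ i ∈ Finset.univ, ∀ j ∈ Finset.univ, i ≠ j →
      Disjoint ((G i).edgeSet.toFinset) ((G j).edgeSet.toFinset) := by
    intro i _ j _ hij
    exact Set.disjoint_toFinset.2 (h.1 i j hij)
  have hcard := Finset.card_biUnion hd
  rw [hU] at hcard
  have h1 : ∀ i, edgeCnt (G i) = ((G i).edgeSet.toFinset).card :=
    fun i => Set.ncard_eq_toFinset_card' _
  have h2 : (⊤ : SimpleGraph (Fin n)).edgeSet.toFinset.card = Nat.choose n 2 := by
    rw [← Set.ncard_eq_toFinset_card', ncard_top_edgeSet, Fintype.card_fin]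
  calc ∑ i, edgeCnt (G i) = ∑ i, ((G i).edgeSet.toFinset).card := by
        exact Finset.sum_congr rfl (fun i _ => h1 i)
    _ = Nat.choose n 2 := by rw [← hcard, h2]

theorem masterPW (n k p q r : ℕ) (hk2 : 2 ≤ k) (hp : 2 ≤ p) (hq : q < k) (hr : r < p)
    (hN : Nat.choose n 2 = k * Nat.choose p 2 + q * p + r) :
    ∀ s ∈ {s : ℝ | ∃ G : Fin k → SimpleGraph (Fin n), IsKDecomp G ∧ s = ∑ i, Mad (G i)},
      s ≤ (k:ℝ)*((p:ℝ)-1) + (q:ℝ) + posP (p:ℝ) (r:ℝ) := by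
  classical
  have hpR : (2:ℝ) ≤ (p:ℝ) := by exact_mod_cast hp
  rintro s ⟨G, hG, rfl⟩
  have hpZ : (2:ℤ) ≤ (p:ℤ) := by exact_mod_cast hp
  have hTp : 2 * ((Nat.choose p 2 : ℤ)) = (p:ℤ)*((p:ℤ)-1) := by
    have h := two_choose p
    have h5 : ((2 * p.choose 2 : ℕ):ℤ) = ((p * (p - 1) : ℕ):ℤ) := by exact_mod_cast h
    push_cast [Nat.cast_sub (by omega : 1 ≤ p)] at h5
    linarith
  set m : Fin k → ℤ := fun i => (edgeCnt (G i) : ℤ) with hmdef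
  set a : Fin k → ℤ := fun i => (m i - (Nat.choose p 2 : ℤ)) / (p:ℤ) with hadef
  set w : Fin k → ℤ := fun i => (m i - (Nat.choose p 2 : ℤ)) % (p:ℤ) with hwdef
  have hwb : ∀ i, 0 ≤ w i ∧ w i < p := fun i => emod_bounds _ _ hpZ
  have hsplit : ∀ i, m i = (Nat.choose p 2 : ℤ) + (p:ℤ) * a i + w i := by
    intro i
    have h6 := Int.mul_ediv_add_emod (m i - (Nat.choose p 2 : ℤ)) (p:ℤ)
    rw [hadef, hwdef]
    linarith
  have hmw : ∀ i, 2 * m i = (p:ℤ)*((p:ℤ)-1) + 2*(p:ℤ)*(a i) + 2*(w i) := by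
    intro i
    have := hsplit i
    linarith
  have hMad : ∀ i, Mad (G i) ≤ ((a i : ℝ)) + (p:ℝ) - 1 + posP (p:ℝ) ((w i : ℝ)) := by
    intro i
    exact mad_le_bound (G i) p (a i) (w i) hpZ (hwb i).1 (by linarith [(hwb i).2]) (hmw i)
  have hsum : ∑ i, m i = (k:ℤ) * (Nat.choose p 2 : ℤ) + (q:ℤ)*(p:ℤ) + (r:ℤ) := by
    have h7 := decomp_sum G hG
    rw [hN] at h7
    rw [hmdef]
    beta_reduce
    exact_mod_cast h7
  have hsplitsum : ∑ i, m i = (k:ℤ) * (Nat.choose p 2 : ℤ) + (p:ℤ)*(∑ i, a i) + ∑ i, w i := by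
    rw [Finset.sum_congr rfl (fun i _ => hsplit i)]
    rw [Finset.sum_add_distrib, Finset.sum_add_distrib, Finset.sum_const, Finset.card_univ,
      Fintype.card_fin, ← Finset.mul_sum, nsmul_eq_mul]
  have hAW : (p:ℤ)*(∑ i, a i) + ∑ i, w i = (q:ℤ)*(p:ℤ) + (r:ℤ) := by linarith [hsum, hsplitsum]
  have hWsum : (∑ i, w i) % (p:ℤ) = (r:ℤ) := by
    have e1 : ∑ i, w i = (r:ℤ) + (p:ℤ)*((q:ℤ) - ∑ i, a i) := by linarith [hAW]
    rw [e1, Int.add_mul_emod_self_left]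
    exact Int.emod_eq_of_lt (by positivity) (by exact_mod_cast hr)
  have hdel := subaddSum (p:ℤ) hpZ w hwb Finset.univ
  rw [hWsum] at hdel
  -- combine
  have hsum_mad : ∑ i, Mad (G i) ≤ (∑ i, ((a i:ℝ))) + (k:ℝ)*((p:ℝ)-1)
      + ∑ i, posP (p:ℝ) ((w i:ℝ)) := by
    have h8 := Finset.sum_le_sum (fun i (_ : i ∈ Finset.univ) => hMad i)
    have h9 : ∑ i, (((a i:ℝ)) + (p:ℝ) - 1 + posP (p:ℝ) ((w i:ℝ)))
        = (∑ i, ((a i:ℝ))) + (k:ℝ)*((p:ℝ)-1) + ∑ i, posP (p:ℝ) ((w i:ℝ)) := by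
      simp only [Finset.sum_add_distrib, Finset.sum_sub_distrib, Finset.sum_const,
        Finset.card_univ, Fintype.card_fin, nsmul_eq_mul]
      push_cast
      ring
    rw [h9] at h8
    exact h8
  have hposdel : ∀ i, posP (p:ℝ) ((w i:ℝ)) = ((w i:ℝ))/(p:ℝ) - delP (p:ℝ) ((w i:ℝ)) := by
    intro i
    unfold delP
    ring
  have hpos_sum : ∑ i, posP (p:ℝ) ((w i:ℝ))
      = (∑ i, ((w i:ℝ)))/(p:ℝ) - ∑ i, delP (p:ℝ) ((w i:ℝ)) := by
    rw [Finset.sum_congr rfl (fun i _ => hposdel i), Finset.sum_sub_distrib, Finset.sum_div]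
  have hAWR : (p:ℝ)*(∑ i, ((a i:ℝ))) + (∑ i, ((w i:ℝ))) = (q:ℝ)*(p:ℝ) + (r:ℝ) := by
    have h10 := congrArg (fun z : ℤ => (z:ℝ)) hAW
    push_cast at h10
    linarith [h10]
  have hdelr : delP (p:ℝ) ((r:ℝ)) = (r:ℝ)/(p:ℝ) - posP (p:ℝ) ((r:ℝ)) := by
    unfold delP
    ring
  have hdel' : delP (p:ℝ) ((r:ℝ)) ≤ ∑ i, delP (p:ℝ) ((w i:ℝ)) := by
    have h11 := hdel
    push_cast at h11
    exact h11
  have hp0 : (0:ℝ) < (p:ℝ) := by linarith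
  calc ∑ i, Mad (G i)
      ≤ (∑ i, ((a i:ℝ))) + (k:ℝ)*((p:ℝ)-1) + ((∑ i, ((w i:ℝ)))/(p:ℝ) - delP (p:ℝ) ((r:ℝ))) := by
        rw [hpos_sum] at hsum_mad
        linarith [hsum_mad, hdel']
    _ = (k:ℝ)*((p:ℝ)-1) + (q:ℝ) + posP (p:ℝ) (r:ℝ) := by
        rw [hdelr]
        field_simp
        nlinarith [hAWR]


theorem finCardFilterP (N : ℕ) (P : ℕ → Prop) [DecidablePred P] :
    (Finset.univ.filter (fun b : Fin N => P b.val)).card = ((Finset.Iio N).filter P).card := by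
  have h : (((Finset.univ : Finset (Fin N)).map Fin.valEmbedding).filter P).card
      = (Finset.univ.filter (fun b : Fin N => P b.val)).card := by
    rw [Finset.filter_map, Finset.card_map]; rfl
  rw [← h, Fin.map_valEmbedding_univ]

def HH (p r : ℕ) : SimpleGraph (Fin (p+1)) :=
  SimpleGraph.fromRel (fun a b => a.val < p ∧ (b.val < p ∨ a.val < r))

instance (p r : ℕ) : DecidableRel (HH p r).Adj := fun a b =>
  decidable_of_iff (a ≠ b ∧ ((a.val < p ∧ (b.val < p ∨ a.val < r)) ∨ (b.val < p ∧ (a.val < p ∨ b.val < r))))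
    (by unfold HH; exact (SimpleGraph.fromRel_adj (fun x y : Fin (p+1) => x.val < p ∧ (y.val < p ∨ x.val < r)) a b).symm)

theorem HH_adj (p r : ℕ) (hrp : r ≤ p) (a b : Fin (p+1)) :
    (HH p r).Adj a b ↔ a ≠ b ∧ ((a.val < p ∧ b.val < p) ∨ a.val < r ∨ b.val < r) := by
  unfold HH
  rw [SimpleGraph.fromRel_adj]
  constructor
  · rintro ⟨hab, h⟩
    exact ⟨hab, by omega⟩
  · rintro ⟨hab, h⟩
    exact ⟨hab, by omega⟩

theorem HH_deg (p r : ℕ) (hrp : r ≤ p) (v : Fin (p+1)) :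
    (HH p r).degree v = if v.val < r then p else if v.val < p then p - 1 else r := by
  rw [SimpleGraph.degree, SimpleGraph.neighborFinset_eq_filter]
  rcases Nat.lt_or_ge v.val r with h1 | h1
  · rw [if_pos h1]
    have he : Finset.univ.filter ((HH p r).Adj v) = Finset.univ.erase v := by
      ext b
      rw [Finset.mem_filter, Finset.mem_erase, HH_adj p r hrp]
      have hv := v.isLt
      have hb := b.isLt
      constructor
      · rintro ⟨_, hne, _⟩
        exact ⟨fun hc => hne (by rw [hc]), Finset.mem_univ _⟩
      · rintro ⟨hne, _⟩
        exact ⟨Finset.mem_univ _, fun hc => hne (by rw [hc]), by omega⟩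
    rw [he, Finset.card_erase_of_mem (Finset.mem_univ _), Finset.card_univ, Fintype.card_fin]
    omega
  · rcases Nat.lt_or_ge v.val p with h2 | h2
    · rw [if_neg (by omega), if_pos h2]
      have he : Finset.univ.filter ((HH p r).Adj v)
          = (Finset.univ.filter (fun b : Fin (p+1) => b.val < p)).erase v := by
        ext b
        rw [Finset.mem_filter, Finset.mem_erase, Finset.mem_filter, HH_adj p r hrp]
        constructor
        · rintro ⟨_, hne, hd⟩
          refine ⟨fun hc => hne (by rw [hc]), Finset.mem_univ _, by omega⟩
        · rintro ⟨hne, _, hb⟩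
          refine ⟨Finset.mem_univ _, fun hc => hne (by rw [hc]), by omega⟩
      rw [he, Finset.card_erase_of_mem]
      · rw [finCardFilterP (p+1) (fun t => t < p)]
        have : (Finset.Iio (p+1)).filter (fun t => t < p) = Finset.Iio p := by
          ext t
          simp only [Finset.mem_filter, Finset.mem_Iio]
          omega
        rw [this, Nat.card_Iio]
      · exact Finset.mem_filter.2 ⟨Finset.mem_univ _, h2⟩
    · rw [if_neg (by omega), if_neg (by omega)]
      have he : Finset.univ.filter ((HH p r).Adj v)
          = Finset.univ.filter (fun b : Fin (p+1) => b.val < r) := by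
        ext b
        rw [Finset.mem_filter, Finset.mem_filter, HH_adj p r hrp]
        have hv := v.isLt
        constructor
        · rintro ⟨_, _, hd⟩
          exact ⟨Finset.mem_univ _, by omega⟩
        · rintro ⟨_, hb⟩
          refine ⟨Finset.mem_univ _, fun hc => ?_, by omega⟩
          · have : v.val = b.val := by rw [hc]
            omega
      rw [he]
      rw [finCardFilterP (p+1) (fun t => t < r)]
      have : (Finset.Iio (p+1)).filter (fun t => t < r) = Finset.Iio r := by
        ext t
        simp only [Finset.mem_filter, Finset.mem_Iio]
        omega
      rw [this, Nat.card_Iio]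

theorem HH_sum_deg (p r : ℕ) (hrp : r < p) :
    ∑ v, (HH p r).degree v = p * (p-1) + 2*r := by
  have h1 : ∀ v : Fin (p+1), (HH p r).degree v
      = if v.val < r then p else if v.val < p then p - 1 else r :=
    HH_deg p r (le_of_lt hrp)
  rw [Finset.sum_congr rfl (fun v _ => h1 v)]
  rw [Finset.sum_ite]
  rw [Finset.sum_ite]
  rw [Finset.sum_const, Finset.sum_const, Finset.sum_const]
  rw [Finset.filter_filter, Finset.filter_filter]
  rw [finCardFilterP (p+1) (fun t => t < r)]
  rw [finCardFilterP (p+1) (fun t => ¬ t < r ∧ t < p)]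
  rw [finCardFilterP (p+1) (fun t => ¬ t < r ∧ ¬ t < p)]
  have e1 : (Finset.Iio (p+1)).filter (fun t => t < r) = Finset.Iio r := by
    ext t; simp only [Finset.mem_filter, Finset.mem_Iio]; omega
  have e2 : (Finset.Iio (p+1)).filter (fun t => ¬ t < r ∧ t < p) = Finset.Ico r p := by
    ext t; simp only [Finset.mem_filter, Finset.mem_Iio, Finset.mem_Ico]; omega
  have e3 : (Finset.Iio (p+1)).filter (fun t => ¬ t < r ∧ ¬ t < p) = {p} := by
    ext t; simp only [Finset.mem_filter, Finset.mem_Iio, Finset.mem_singleton]; omega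
  rw [e1, e2, e3, Nat.card_Iio, Nat.card_Ico, Finset.card_singleton]
  simp only [smul_eq_mul, one_mul]
  zify [le_of_lt hrp, show 1 ≤ p by omega]
  ring

theorem HH_edgeCnt (p r : ℕ) (hrp : r < p) : edgeCnt (HH p r) = Nat.choose p 2 + r := by
  have h := SimpleGraph.sum_degrees_eq_twice_card_edges (HH p r)
  rw [HH_sum_deg p r hrp] at h
  have h2 : edgeCnt (HH p r) = (HH p r).edgeFinset.card := by
    unfold edgeCnt
    rw [Set.ncard_eq_toFinset_card']
    simp [SimpleGraph.edgeFinset]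
  have h3 := two_choose p
  omega

theorem clique_adj {n : ℕ} (S : Finset (Fin n)) (a b : Fin n) :
    (cliqueOn S).Adj a b ↔ a ≠ b ∧ (a ∈ S ∧ b ∈ S) := by
  unfold cliqueOn
  rw [SimpleGraph.fromRel_adj]
  tauto

theorem mad_clique_ge {n : ℕ} (S : Finset (Fin n)) (hS : 1 ≤ S.card) :
    ((S.card:ℝ) - 1) ≤ Mad (cliqueOn S) := by
  classical
  have hadj : ∀ a b, a ∈ S → b ∈ S → a ≠ b → (cliqueOn S).Adj a b := by
    intro a b ha hb hab
    exact (clique_adj S a b).2 ⟨hab, ha, hb⟩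
  have h1 := inducedEdgeCnt_ge_choose (cliqueOn S) S hadj
  have hX : S.Nonempty := Finset.card_pos.1 hS
  have h2 := mad_ge (cliqueOn S) S hX
  have hsR : (0:ℝ) < (S.card:ℝ) := by exact_mod_cast hS
  have h3 : ((S.card:ℝ) - 1) ≤ 2 * (inducedEdgeCnt (cliqueOn S) S : ℝ) / (S.card:ℝ) := by
    rw [le_div_iff₀ hsR]
    have h4 : (2 * (S.card.choose 2) : ℕ) ≤ 2 * inducedEdgeCnt (cliqueOn S) S :=
      Nat.mul_le_mul_left 2 h1
    rw [two_choose] at h4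
    have h5 : ((S.card * (S.card - 1) : ℕ):ℝ) ≤ ((2 * inducedEdgeCnt (cliqueOn S) S : ℕ):ℝ) := by
      exact_mod_cast h4
    push_cast [Nat.cast_sub hS] at h5
    nlinarith [h5]
  linarith

theorem HH_mad_ge1 (p r : ℕ) (hp : 2 ≤ p) (hrp : r < p) : ((p:ℝ) - 1) ≤ Mad (HH p r) := by
  classical
  have hcard : (Finset.univ.filter (fun b : Fin (p+1) => b.val < p)).card = p := by
    rw [finCardFilterP (p+1) (fun t => t < p)]
    have e : (Finset.Iio (p+1)).filter (fun t => t < p) = Finset.Iio p := by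
      ext t; simp only [Finset.mem_filter, Finset.mem_Iio]; omega
    rw [e, Nat.card_Iio]
  set X := Finset.univ.filter (fun b : Fin (p+1) => b.val < p) with hXdef
  have hadj : ∀ a b, a ∈ X → b ∈ X → a ≠ b → (HH p r).Adj a b := by
    intro a b ha hb hab
    rw [hXdef, Finset.mem_filter] at ha hb
    rw [HH_adj p r (le_of_lt hrp)]
    exact ⟨hab, Or.inl ⟨ha.2, hb.2⟩⟩
  have h1 := inducedEdgeCnt_ge_choose (HH p r) X hadj
  rw [hcard] at h1
  have hX : X.Nonempty := by
    rw [← Finset.card_pos, hcard]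
    omega
  have h2 := mad_ge (HH p r) X hX
  rw [hcard] at h2
  have hpR : (0:ℝ) < (p:ℝ) := by exact_mod_cast (by omega : 0 < p)
  have h3 : ((p:ℝ) - 1) ≤ 2 * (inducedEdgeCnt (HH p r) X : ℝ) / (p:ℝ) := by
    rw [le_div_iff₀ hpR]
    have h4 : (2 * (p.choose 2) : ℕ) ≤ 2 * inducedEdgeCnt (HH p r) X := Nat.mul_le_mul_left 2 h1
    rw [two_choose] at h4
    have h5 : ((p * (p - 1) : ℕ):ℝ) ≤ ((2 * inducedEdgeCnt (HH p r) X : ℕ):ℝ) := by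
      exact_mod_cast h4
    push_cast [Nat.cast_sub (by omega : 1 ≤ p)] at h5
    nlinarith [h5]
  linarith

theorem HH_mad_ge2 (p r : ℕ) (hp : 2 ≤ p) (hrp : r < p) :
    2*((Nat.choose p 2 + r : ℕ):ℝ)/((p:ℝ)+1) ≤ Mad (HH p r) := by
  classical
  have h2 := mad_ge (HH p r) Finset.univ Finset.univ_nonempty
  rw [inducedEdgeCnt_univ, HH_edgeCnt p r hrp] at h2
  rw [Finset.card_univ, Fintype.card_fin] at h2
  have : ((p+1:ℕ):ℝ) = (p:ℝ)+1 := by push_cast; ring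
  rw [this] at h2
  exact h2

theorem mad_le_two_edgeCnt {V : Type} [Fintype V] (G : SimpleGraph V) :
    Mad G ≤ 2*(edgeCnt G : ℝ) :=
  Real.sSup_le (by
    rintro d hd
    have := mad_bddAbove G d hd
    linarith) (by positivity)

theorem gMax_bddAbove (m₀ : ℕ) :
    ∀ d ∈ {d : ℝ | ∃ (V : Type) (hV : Fintype V) (G : SimpleGraph V),
      @edgeCnt V hV G = m₀ ∧ d = @Mad V hV G}, d ≤ 2*(m₀:ℝ) := by
  rintro d ⟨V, hV, G, hcnt, rfl⟩
  have := @mad_le_two_edgeCnt V hV G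
  rw [hcnt] at this
  exact this

theorem gMax_ge_HH (p r : ℕ) (hp : 2 ≤ p) (hrp : r < p) :
    Mad (HH p r) ≤ gMax (Nat.choose p 2 + r) := by
  apply le_csSup ⟨_, gMax_bddAbove (Nat.choose p 2 + r)⟩
  exact ⟨Fin (p+1), inferInstance, HH p r, HH_edgeCnt p r hrp, rfl⟩

theorem masterUB (n k p q r : ℕ) (hk2 : 2 ≤ k) (hp : 2 ≤ p) (hq : q < k) (hr : r < p)
    (hN : Nat.choose n 2 = k * Nat.choose p 2 + q * p + r) :
    MSum k n ≤ (k:ℝ)*((p:ℝ)-1) + (q:ℝ) + posP (p:ℝ) (r:ℝ) := by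
  have hpR : (2:ℝ) ≤ (p:ℝ) := by exact_mod_cast hp
  have hkR : (2:ℝ) ≤ (k:ℝ) := by exact_mod_cast hk2
  have hB : 0 ≤ (k:ℝ)*((p:ℝ)-1) + (q:ℝ) + posP (p:ℝ) (r:ℝ) := by
    have := posP_nonneg (p:ℝ) (r:ℝ)
    have hq0 : (0:ℝ) ≤ (q:ℝ) := Nat.cast_nonneg q
    nlinarith
  exact Real.sSup_le (masterPW n k p q r hk2 hp hq hr hN) hB

theorem msum_bddAbove (n k p q r : ℕ) (hk2 : 2 ≤ k) (hp : 2 ≤ p) (hq : q < k) (hr : r < p)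
    (hN : Nat.choose n 2 = k * Nat.choose p 2 + q * p + r) :
    BddAbove {s : ℝ | ∃ G : Fin k → SimpleGraph (Fin n), IsKDecomp G ∧ s = ∑ i, Mad (G i)} :=
  ⟨_, masterPW n k p q r hk2 hp hq hr hN⟩

/-- upper bound for `M(k,n)` and sufficient condition for equality. -/
theorem madSum_upper_and_equality (n k p q r : ℕ) (hn : 3 ≤ n) (hk2 : 2 ≤ k)
    (hk : k ≤ Nat.choose n 2) (hp : 2 ≤ p)
    (h1 : k * Nat.choose p 2 ≤ Nat.choose n 2)
    (h2 : Nat.choose n 2 < k * Nat.choose (p + 1) 2)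
    (hN : Nat.choose n 2 = k * Nat.choose p 2 + q * p + r) (hq : q < k) (hr : r < p) :
    (2 * r + 1 ≤ p → MSum k n ≤ (k : ℝ) * p - k + q) ∧
    (p ≤ 2 * r + 1 →
      MSum k n ≤ (k : ℝ) * p - k + q + 1 - 2 * ((p : ℝ) - r) / ((p : ℝ) + 1)) ∧
    (r = 0 →
      (∃ S : Fin k → Finset (Fin n),
        IsKDecomp (fun i => cliqueOn (S i)) ∧
        (Finset.univ.filter (fun i => (S i).card = p + 1)).card = q ∧
        (∀ i, (S i).card = p + 1 ∨ (S i).card = p)) →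
      MSum k n = (k : ℝ) * p - k + q) ∧
    (0 < r →
      (∃ (G : Fin k → SimpleGraph (Fin n)) (i₀ : Fin k), IsKDecomp G ∧
        edgeCnt (G i₀) = Nat.choose p 2 + r ∧
        Mad (G i₀) = gMax (Nat.choose p 2 + r) ∧
        ∃ S : Fin k → Finset (Fin n),
          (∀ i, i ≠ i₀ → G i = cliqueOn (S i)) ∧
          ((Finset.univ.erase i₀).filter (fun i => (S i).card = p + 1)).card = q ∧
          (∀ i, i ≠ i₀ → (S i).card = p + 1 ∨ (S i).card = p)) →
      ((2 * r + 1 ≤ p → MSum k n = (k : ℝ) * p - k + q) ∧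
       (p ≤ 2 * r + 1 →
         MSum k n = (k : ℝ) * p - k + q + 1 - 2 * ((p : ℝ) - r) / ((p : ℝ) + 1)))) := by
  classical
  have hpR : (2:ℝ) ≤ (p:ℝ) := by exact_mod_cast hp
  have hkR : (2:ℝ) ≤ (k:ℝ) := by exact_mod_cast hk2
  have hqk : (q:ℝ) ≤ (k:ℝ) - 1 := by
    have : ((q:ℕ):ℝ) ≤ ((k-1:ℕ):ℝ) := by exact_mod_cast (by omega : q ≤ k - 1)
    push_cast [Nat.cast_sub (by omega : 1 ≤ k)] at this
    linarith
  have hUB := masterUB n k p q r hk2 hp hq hr hN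
  have hBdd := msum_bddAbove n k p q r hk2 hp hq hr hN
  -- posP evaluations
  have hpos1 : 2 * r + 1 ≤ p → posP (p:ℝ) (r:ℝ) = 0 := by
    intro h
    apply max_eq_left
    apply div_nonpos_of_nonpos_of_nonneg
    · have : ((2*r+1:ℕ):ℝ) ≤ ((p:ℕ):ℝ) := by exact_mod_cast h
      push_cast at this
      linarith
    · linarith
  have hpos2 : p ≤ 2 * r + 1 → posP (p:ℝ) (r:ℝ) = (2*(r:ℝ) - (p:ℝ) + 1)/((p:ℝ)+1) := by
    intro h
    apply max_eq_right
    apply div_nonneg _ (by linarith)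
    have : ((p:ℕ):ℝ) ≤ ((2*r+1:ℕ):ℝ) := by exact_mod_cast h
    push_cast at this
    linarith
  have hT1 : 2 * r + 1 ≤ p →
      (k:ℝ)*((p:ℝ)-1) + (q:ℝ) + posP (p:ℝ) (r:ℝ) = (k : ℝ) * p - k + q := by
    intro h
    rw [hpos1 h]
    ring
  have hT2 : p ≤ 2 * r + 1 →
      (k:ℝ)*((p:ℝ)-1) + (q:ℝ) + posP (p:ℝ) (r:ℝ)
        = (k : ℝ) * p - k + q + 1 - 2 * ((p : ℝ) - r) / ((p : ℝ) + 1) := by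
    intro h
    rw [hpos2 h]
    field_simp
    ring
  refine ⟨fun h => by rw [← hT1 h]; exact hUB, fun h => by rw [← hT2 h]; exact hUB, ?_, ?_⟩
  · -- part 3 : r = 0, clique decomposition
    rintro hr0 ⟨S, hdec, hcnt, hcards⟩
    have hple : 2 * r + 1 ≤ p := by omega
    have hS1 : ∀ i, 1 ≤ (S i).card := by
      intro i
      rcases hcards i with h | h <;> omega
    -- lower bound
    have hmem : (∑ i, Mad (cliqueOn (S i))) ∈
        {s : ℝ | ∃ G : Fin k → SimpleGraph (Fin n), IsKDecomp G ∧ s = ∑ i, Mad (G i)} :=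
      ⟨fun i => cliqueOn (S i), hdec, rfl⟩
    have hge1 : ∀ i, ((S i).card : ℝ) - 1 ≤ Mad (cliqueOn (S i)) :=
      fun i => mad_clique_ge (S i) (hS1 i)
    have hsum1 : ∑ i, (((S i).card : ℝ) - 1) ≤ ∑ i, Mad (cliqueOn (S i)) :=
      Finset.sum_le_sum (fun i _ => hge1 i)
    have hval : ∀ i, ((S i).card : ℝ) - 1
        = if (S i).card = p + 1 then (p:ℝ) else (p:ℝ) - 1 := by
      intro i
      rcases hcards i with h | h
      · rw [if_pos h, h]
        push_cast
        ring
      · rw [if_neg (by omega), h]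
    have hsum2 : ∑ i, (((S i).card : ℝ) - 1) = (q:ℝ)*(p:ℝ) + ((k:ℝ)-(q:ℝ))*((p:ℝ)-1) := by
      rw [Finset.sum_congr rfl (fun i _ => hval i), Finset.sum_ite, Finset.sum_const,
        Finset.sum_const, hcnt]
      have hcompl : (Finset.univ.filter (fun i => ¬ (S i).card = p + 1)).card = k - q := by
        have := Finset.card_filter_add_card_filter_not
          (s := (Finset.univ : Finset (Fin k))) (p := fun i => (S i).card = p + 1)
        rw [hcnt, Finset.card_univ, Fintype.card_fin] at this
        omega
      rw [hcompl]
      simp only [nsmul_eq_mul]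
      push_cast [Nat.cast_sub (by omega : q ≤ k)]
      ring
    have hlow : (k : ℝ) * p - k + q ≤ ∑ i, Mad (cliqueOn (S i)) := by
      rw [hsum2] at hsum1
      nlinarith [hsum1]
    have hge : (k : ℝ) * p - k + q ≤ MSum k n :=
      le_trans hlow (le_csSup hBdd hmem)
    exact le_antisymm (by rw [← hT1 hple]; exact hUB) hge
  · -- part 4
    rintro hrpos ⟨G, i₀, hdec, hcnt0, hmad0, S, hGS, hcntq, hcards⟩
    have hmem : (∑ i, Mad (G i)) ∈
        {s : ℝ | ∃ G : Fin k → SimpleGraph (Fin n), IsKDecomp G ∧ s = ∑ i, Mad (G i)} :=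
      ⟨G, hdec, rfl⟩
    have hsplit : ∑ i, Mad (G i) = Mad (G i₀) + ∑ i ∈ Finset.univ.erase i₀, Mad (G i) :=
      (Finset.add_sum_erase _ _ (Finset.mem_univ i₀)).symm
    have hge1 : ∀ i ∈ Finset.univ.erase i₀, ((S i).card : ℝ) - 1 ≤ Mad (G i) := by
      intro i hi
      have hne : i ≠ i₀ := (Finset.mem_erase.1 hi).1
      rw [hGS i hne]
      apply mad_clique_ge
      rcases hcards i hne with h | h <;> omega
    have hsum1 : ∑ i ∈ Finset.univ.erase i₀, (((S i).card : ℝ) - 1)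
        ≤ ∑ i ∈ Finset.univ.erase i₀, Mad (G i) := Finset.sum_le_sum hge1
    have hval : ∀ i ∈ Finset.univ.erase i₀, ((S i).card : ℝ) - 1
        = if (S i).card = p + 1 then (p:ℝ) else (p:ℝ) - 1 := by
      intro i hi
      have hne : i ≠ i₀ := (Finset.mem_erase.1 hi).1
      rcases hcards i hne with h | h
      · rw [if_pos h, h]
        push_cast
        ring
      · rw [if_neg (by omega), h]
    have hcerase : (Finset.univ.erase i₀).card = k - 1 := by
      rw [Finset.card_erase_of_mem (Finset.mem_univ _), Finset.card_univ, Fintype.card_fin]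
    have hsum2 : ∑ i ∈ Finset.univ.erase i₀, (((S i).card : ℝ) - 1)
        = (q:ℝ)*(p:ℝ) + ((k:ℝ)-1-(q:ℝ))*((p:ℝ)-1) := by
      rw [Finset.sum_congr rfl hval, Finset.sum_ite, Finset.sum_const, Finset.sum_const, hcntq]
      have hcompl : ((Finset.univ.erase i₀).filter (fun i => ¬ (S i).card = p + 1)).card
          = k - 1 - q := by
        have := Finset.card_filter_add_card_filter_not
          (s := Finset.univ.erase i₀) (p := fun i => (S i).card = p + 1)
        rw [hcntq, hcerase] at this
        omega
      rw [hcompl]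
      simp only [nsmul_eq_mul]
      have hq1 : q ≤ k - 1 := by omega
      push_cast [Nat.cast_sub hq1, Nat.cast_sub (by omega : 1 ≤ k)]
      ring
    -- lower bounds on Mad (G i₀)
    have hm1 : ((p:ℝ) - 1) ≤ Mad (G i₀) := by
      rw [hmad0]
      exact le_trans (HH_mad_ge1 p r hp hr) (gMax_ge_HH p r hp hr)
    have hm2 : 2*((Nat.choose p 2 + r : ℕ):ℝ)/((p:ℝ)+1) ≤ Mad (G i₀) := by
      rw [hmad0]
      exact le_trans (HH_mad_ge2 p r hp hr) (gMax_ge_HH p r hp hr)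
    have hmsum_ge : ∀ v : ℝ, v ≤ Mad (G i₀) →
        v + ((q:ℝ)*(p:ℝ) + ((k:ℝ)-1-(q:ℝ))*((p:ℝ)-1)) ≤ MSum k n := by
      intro v hv
      refine le_trans ?_ (le_csSup hBdd hmem)
      rw [hsplit]
      rw [hsum2] at hsum1
      linarith
    constructor
    · intro h
      refine le_antisymm (by rw [← hT1 h]; exact hUB) ?_
      have := hmsum_ge _ hm1
      nlinarith [this]
    · intro h
      refine le_antisymm (by rw [← hT2 h]; exact hUB) ?_
      have hmv := hmsum_ge _ hm2
      have h2m : 2*((Nat.choose p 2 + r : ℕ):ℝ) = (p:ℝ)*((p:ℝ)-1) + 2*(r:ℝ) := by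
        have h3 := two_choose p
        have h4 : ((2 * p.choose 2 : ℕ):ℝ) = ((p * (p - 1) : ℕ):ℝ) := by exact_mod_cast h3
        push_cast [Nat.cast_sub (by omega : 1 ≤ p)] at h4
        push_cast
        linarith
      have hval2 : 2*((Nat.choose p 2 + r : ℕ):ℝ)/((p:ℝ)+1)
          + ((q:ℝ)*(p:ℝ) + ((k:ℝ)-1-(q:ℝ))*((p:ℝ)-1))
          = (k : ℝ) * p - k + q + 1 - 2 * ((p : ℝ) - r) / ((p : ℝ) + 1) := by
        rw [h2m]
        field_simp
        ring
      rw [hval2] at hmv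
      exact hmv
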